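/- Let n ≥ 2 be an integer, s ∈ ℂ, and y′ ∈ ℝ^{n−1}. On the interior of the light cone Ω = {(x,y) ∈ (0,∞) × ℝ^{n−1} : |y − y′| < x}, the function u(x,y) = x^{−s}·(x² − |y−y′|²)^s (complex powers of positive reals) satisfies −(x∂ₓ)²u + (n−1)x∂ₓu + x²Δ_y u + s(n+s−1)·u = 0 at every point of Ω, where Δ_y = Σⱼ ∂²/∂yⱼ². Equivalently, u = x^s(1 − |y−y′|²/x²)^s solves the model Klein–Gordon equation (□ − λ)u = 0 with λ = −s(n+s−1). -/

import Mathlib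

/-- `∂ₓ` on functions of `(x, y) ∈ ℝ × ℝ^m`. -/
noncomputable def pderivX {m : ℕ} (v : ℝ × (Fin m → ℝ) → ℂ) (p : ℝ × (Fin m → ℝ)) : ℂ :=
  fderiv ℝ v p (1, 0)

/-- `∂_{yⱼ}` on functions of `(x, y) ∈ ℝ × ℝ^m`. -/
noncomputable def pderivY {m : ℕ} (j : Fin m) (v : ℝ × (Fin m → ℝ) → ℂ)
    (p : ℝ × (Fin m → ℝ)) : ℂ :=
  fderiv ℝ v p (0, Pi.single j 1)

/-- The boundary Laplacian `Δ_y = Σⱼ ∂²/∂yⱼ²`. -/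
noncomputable def lapY {m : ℕ} (v : ℝ × (Fin m → ℝ) → ℂ) (p : ℝ × (Fin m → ℝ)) : ℂ :=
  ∑ j, pderivY j (pderivY j v) p

open ContinuousLinearMap Complex

namespace S9
variable {m : ℕ} (y' : Fin m → ℝ)

lemma hasDerivAt_real_cpow {t : ℝ} (ht : 0 < t) (c : ℂ) :
    HasDerivAt (fun x : ℝ => (x : ℂ) ^ c) (c * (t : ℂ) ^ (c - 1)) t := by
  have h0 : HasDerivAt (fun z : ℂ => z ^ c) (c * (t : ℂ) ^ (c - 1)) (t : ℂ) := by
    have := (hasDerivAt_id ((t : ℝ) : ℂ)).cpow_const (c := c)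
      (by simpa [Complex.ofReal_mem_slitPlane] using ht)
    simpa using this
  exact h0.comp_ofReal

noncomputable def f (p : ℝ × (Fin m → ℝ)) : ℝ := p.1 ^ 2 - ∑ j, (p.2 j - y' j) ^ 2

noncomputable def w (a b : ℂ) (p : ℝ × (Fin m → ℝ)) : ℂ :=
  (p.1 : ℂ) ^ a * ((f y' p : ℝ) : ℂ) ^ b

noncomputable def Df (p : ℝ × (Fin m → ℝ)) : (ℝ × (Fin m → ℝ)) →L[ℝ] ℝ :=
  (2 * p.1) • (fst ℝ ℝ (Fin m → ℝ)) -
    ∑ j, (2 * (p.2 j - y' j)) • ((proj j).comp (snd ℝ ℝ (Fin m → ℝ)))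

lemma hasFDerivAt_f (p : ℝ × (Fin m → ℝ)) : HasFDerivAt (f y') (Df y' p) p := by
  have h1 : HasFDerivAt (fun q : ℝ × (Fin m → ℝ) => q.1 ^ 2)
      ((2 * p.1) • (fst ℝ ℝ (Fin m → ℝ))) p := by
    have h := (hasFDerivAt_fst (p := p) (𝕜 := ℝ)).mul (hasFDerivAt_fst (p := p) (𝕜 := ℝ))
    have e : (fun q : ℝ × (Fin m → ℝ) => q.1 ^ 2) = fun q => q.1 * q.1 := by
      funext q; ring
    rw [e]
    exact h.congr_fderiv (by ext v <;> simp <;> ring)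
  have h2 : ∀ j : Fin m, HasFDerivAt (fun q : ℝ × (Fin m → ℝ) => (q.2 j - y' j) ^ 2)
      ((2 * (p.2 j - y' j)) • ((proj j).comp (snd ℝ ℝ (Fin m → ℝ)))) p := by
    intro j
    have hb : HasFDerivAt (fun q : ℝ × (Fin m → ℝ) => q.2 j - y' j)
        ((proj j).comp (snd ℝ ℝ (Fin m → ℝ))) p :=
      (((proj j).comp (snd ℝ ℝ (Fin m → ℝ))).hasFDerivAt).sub_const (y' j)
    have h := hb.mul hb
    have e : (fun q : ℝ × (Fin m → ℝ) => (q.2 j - y' j) ^ 2)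
        = fun q => (q.2 j - y' j) * (q.2 j - y' j) := by funext q; ring
    rw [e]
    exact h.congr_fderiv (by ext v <;> simp <;> ring)
  have hsum := HasFDerivAt.fun_sum (fun j (_ : j ∈ Finset.univ) => h2 j)
  exact h1.sub hsum

noncomputable def Dw (a b : ℂ) (p : ℝ × (Fin m → ℝ)) : (ℝ × (Fin m → ℝ)) →L[ℝ] ℂ :=
  ((p.1 : ℂ) ^ a) • ((smulRight (1 : ℝ →L[ℝ] ℝ) (b * ((f y' p : ℝ) : ℂ) ^ (b - 1))).comp (Df y' p))
    + (((f y' p : ℝ) : ℂ) ^ b) •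
        ((smulRight (1 : ℝ →L[ℝ] ℝ) (a * (p.1 : ℂ) ^ (a - 1))).comp (fst ℝ ℝ (Fin m → ℝ)))

lemma hasFDerivAt_w (a b : ℂ) {p : ℝ × (Fin m → ℝ)} (hx : 0 < p.1) (hf : 0 < f y' p) :
    HasFDerivAt (w y' a b) (Dw y' a b p) p := by
  have hc : HasFDerivAt (fun q : ℝ × (Fin m → ℝ) => (q.1 : ℂ) ^ a)
      ((smulRight (1 : ℝ →L[ℝ] ℝ) (a * (p.1 : ℂ) ^ (a - 1))).comp (fst ℝ ℝ (Fin m → ℝ))) p :=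
    (hasDerivAt_real_cpow hx a).hasFDerivAt.comp p hasFDerivAt_fst
  have hd : HasFDerivAt (fun q : ℝ × (Fin m → ℝ) => ((f y' q : ℝ) : ℂ) ^ b)
      ((smulRight (1 : ℝ →L[ℝ] ℝ) (b * ((f y' p : ℝ) : ℂ) ^ (b - 1))).comp (Df y' p)) p :=
    (hasDerivAt_real_cpow hf b).hasFDerivAt.comp p (hasFDerivAt_f y' p)
  exact hc.mul hd

variable {y'} {p : ℝ × (Fin m → ℝ)} (hx : 0 < p.1) (hf : 0 < f y' p)

lemma Dw_x (a b : ℂ) :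
    Dw y' a b p (1, 0)
      = (p.1 : ℂ) ^ a * (b * ((f y' p : ℝ) : ℂ) ^ (b - 1) * (2 * p.1))
        + ((f y' p : ℝ) : ℂ) ^ b * (a * (p.1 : ℂ) ^ (a - 1)) := by
  simp [Dw, Df, Complex.real_smul]
  push_cast
  ring_nf
  tauto

lemma Dw_y (a b : ℂ) (j : Fin m) :
    Dw y' a b p (0, Pi.single j 1)
      = (p.1 : ℂ) ^ a * (b * ((f y' p : ℝ) : ℂ) ^ (b - 1) * (-(2 * (p.2 j - y' j)))) := by
  simp [Dw, Df, Complex.real_smul, Pi.single_apply, Finset.sum_ite_eq']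
  push_cast
  ring_nf
  tauto

include hx hf

lemma pderivX_w (a b : ℂ) :
    pderivX (w y' a b) p = a * w y' (a - 1) b p + 2 * b * w y' (a + 1) (b - 1) p := by
  have hX0 : (p.1 : ℂ) ≠ 0 := by exact_mod_cast hx.ne'
  rw [pderivX, (hasFDerivAt_w y' a b hx hf).fderiv, Dw_x]
  unfold w
  rw [Complex.cpow_add _ _ hX0, Complex.cpow_one]
  ring

lemma pderivY_w (a b : ℂ) (j : Fin m) :
    pderivY j (w y' a b) p
      = (-2 * b) * (((p.2 j - y' j : ℝ) : ℂ) * w y' a (b - 1) p) := by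
  rw [pderivY, (hasFDerivAt_w y' a b hx hf).fderiv, Dw_y]
  unfold w
  push_cast
  ring


lemma x_mul_w (a b : ℂ) : (p.1 : ℂ) * w y' a b p = w y' (a + 1) b p := by
  have hX0 : (p.1 : ℂ) ≠ 0 := by exact_mod_cast hx.ne'
  unfold w
  rw [Complex.cpow_add _ _ hX0, Complex.cpow_one]
  ring

lemma eventually_mem : ∀ᶠ q in nhds p, 0 < q.1 ∧ 0 < f y' q := by
  have hcont : Continuous (f y' : ℝ × (Fin m → ℝ) → ℝ) := by
    unfold f; fun_prop
  have hO : IsOpen {q : ℝ × (Fin m → ℝ) | 0 < q.1 ∧ 0 < f y' q} :=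
    (isOpen_lt continuous_const continuous_fst).inter (isOpen_lt continuous_const hcont)
  exact hO.mem_nhds ⟨hx, hf⟩


lemma second_x (s : ℂ) :
    pderivX (fun q => (q.1 : ℂ) * pderivX (w y' (-s) s) q) p
      = (-s) * pderivX (w y' (-s) s) p + (2 * s) * pderivX (w y' (2 - s) (s - 1)) p := by
  have hev : (fun q => (q.1 : ℂ) * pderivX (w y' (-s) s) q)
      =ᶠ[nhds p] (fun q => (-s) * w y' (-s) s q + (2 * s) * w y' (2 - s) (s - 1) q) := by
    filter_upwards [eventually_mem hx hf] with q hq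
    rw [pderivX_w hq.1 hq.2]
    have h1 := x_mul_w hq.1 hq.2 (-s - 1) s
    have h2 := x_mul_w hq.1 hq.2 (-s + 1) (s - 1)
    rw [show (-s : ℂ) - 1 + 1 = -s by ring] at h1
    rw [show (-s : ℂ) + 1 + 1 = 2 - s by ring] at h2
    rw [← h1, ← h2]
    ring
  rw [pderivX, hev.fderiv_eq]
  have h1 := hasFDerivAt_w y' (-s) s hx hf
  have h2 := hasFDerivAt_w y' (2 - s) (s - 1) hx hf
  have hc := (h1.const_mul (-s)).fun_add (h2.const_mul (2 * s))
  rw [hc.fderiv, pderivX, h1.fderiv, pderivX, h2.fderiv]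
  simp

lemma second_y (s : ℂ) (j : Fin m) :
    pderivY j (pderivY j (w y' (-s) s)) p
      = -2 * s * w y' (-s) (s - 1) p
        + 4 * s * (s - 1) * ((p.2 j - y' j : ℝ) : ℂ) ^ 2 * w y' (-s) (s - 2) p := by
  have hev : pderivY j (w y' (-s) s)
      =ᶠ[nhds p] fun q => (-2 * s) * (((q.2 j - y' j : ℝ) : ℂ) * w y' (-s) (s - 1) q) := by
    filter_upwards [eventually_mem hx hf] with q hq
    exact pderivY_w hq.1 hq.2 (-s) s j
  rw [pderivY, hev.fderiv_eq]
  have hco : HasFDerivAt (fun q : ℝ × (Fin m → ℝ) => ((q.2 j - y' j : ℝ) : ℂ))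
      (Complex.ofRealCLM.comp ((proj j).comp (snd ℝ ℝ (Fin m → ℝ)))) p :=
    Complex.ofRealCLM.hasFDerivAt.comp p
      ((((proj j).comp (snd ℝ ℝ (Fin m → ℝ))).hasFDerivAt).sub_const (y' j))
  have hw := hasFDerivAt_w y' (-s) (s - 1) hx hf
  have hprod := (hco.fun_mul hw).const_mul (-2 * s)
  rw [hprod.fderiv]
  have hDwy := Dw_y (y' := y') (p := p) (-s) (s - 1) j
  rw [show (s - 1 - 1 : ℂ) = s - 2 by ring] at hDwy
  simp [hDwy, w]
  push_cast
  ring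

lemma lap_w (s : ℂ) :
    lapY (w y' (-s) s) p
      = -2 * (m : ℂ) * s * w y' (-s) (s - 1) p
        + 4 * s * (s - 1) * (((p.1 : ℂ)) ^ 2 - ((f y' p : ℝ) : ℂ)) * w y' (-s) (s - 2) p := by
  unfold lapY
  rw [Finset.sum_congr rfl (fun j _ => second_y hx hf s j)]
  rw [Finset.sum_add_distrib, Finset.sum_const, Finset.card_univ, Fintype.card_fin]
  have hsq : (∑ j, 4 * s * (s - 1) * ((p.2 j - y' j : ℝ) : ℂ) ^ 2 * w y' (-s) (s - 2) p)
      = 4 * s * (s - 1) * (((p.1 : ℂ)) ^ 2 - ((f y' p : ℝ) : ℂ)) * w y' (-s) (s - 2) p := by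
    rw [← Finset.sum_mul, ← Finset.mul_sum]
    have : (∑ j, ((p.2 j - y' j : ℝ) : ℂ) ^ 2)
        = ((p.1 : ℂ)) ^ 2 - ((f y' p : ℝ) : ℂ) := by
      unfold f
      push_cast
      ring
    rw [this]
  rw [hsq]
  simp [nsmul_eq_mul]
  ring

theorem key (s : ℂ) :
    -((p.1 : ℂ) * pderivX (fun q => (q.1 : ℂ) * pderivX (w y' (-s) s) q) p)
      + (m : ℂ) * ((p.1 : ℂ) * pderivX (w y' (-s) s) p)
      + (p.1 : ℂ) ^ 2 * lapY (w y' (-s) s) p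
      + s * ((m : ℂ) + s) * w y' (-s) s p = 0 := by
  have hX0 : (p.1 : ℂ) ≠ 0 := by exact_mod_cast hx.ne'
  have hF0 : ((f y' p : ℝ) : ℂ) ≠ 0 := by exact_mod_cast hf.ne'
  rw [second_x hx hf s, lap_w hx hf s, pderivX_w hx hf (-s) s, pderivX_w hx hf (2 - s) (s - 1)]
  unfold w
  set X := (p.1 : ℂ) with hXdef
  set F := ((f y' p : ℝ) : ℂ) with hFdef
  set A := X ^ (-s - 1) with hAdef
  set B := F ^ (s - 2) with hBdef
  have hA : ∀ k : ℕ, X ^ (-s - 1 + (k : ℂ)) = A * X ^ k := fun k => by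
    rw [hAdef, Complex.cpow_add _ _ hX0, Complex.cpow_natCast]
  have hB : ∀ k : ℕ, F ^ (s - 2 + (k : ℂ)) = B * F ^ k := fun k => by
    rw [hBdef, Complex.cpow_add _ _ hF0, Complex.cpow_natCast]
  have hA0 : X ^ (-s) = A * X := by
    have := hA 1; rw [show (-s - 1 + ((1 : ℕ) : ℂ)) = -s by push_cast; ring] at this
    simpa using this
  have hA1 : X ^ (-s + 1) = A * X ^ 2 := by
    have := hA 2; rw [show (-s - 1 + ((2 : ℕ) : ℂ)) = -s + 1 by push_cast; ring] at this
    simpa using this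
  have hA2 : X ^ (2 - s) = A * X ^ 3 := by
    have := hA 3; rw [show (-s - 1 + ((3 : ℕ) : ℂ)) = 2 - s by push_cast; ring] at this
    simpa using this
  have hA3 : X ^ (2 - s - 1) = A * X ^ 2 := by
    have := hA 2; rw [show (-s - 1 + ((2 : ℕ) : ℂ)) = 2 - s - 1 by push_cast; ring] at this
    simpa using this
  have hA4 : X ^ (2 - s + 1) = A * X ^ 4 := by
    have := hA 4; rw [show (-s - 1 + ((4 : ℕ) : ℂ)) = 2 - s + 1 by push_cast; ring] at this
    simpa using this
  have hB0 : F ^ s = B * F ^ 2 := by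
    have := hB 2; rw [show (s - 2 + ((2 : ℕ) : ℂ)) = s by push_cast; ring] at this
    simpa using this
  have hB1 : F ^ (s - 1) = B * F := by
    have := hB 1; rw [show (s - 2 + ((1 : ℕ) : ℂ)) = s - 1 by push_cast; ring] at this
    simpa using this
  have hB2 : F ^ (s - 1 - 1) = B := by
    rw [show (s - 1 - 1 : ℂ) = s - 2 by ring, ← hBdef]
  simp only [hA0, hA1, hA2, hA3, hA4, hB0, hB1, hB2]
  ring

end S9

/-- on the interior of the light cone
`Ω = {(x,y) : 0 < x, |y−y′|² < x²}` the function
`u(x,y) = x^{−s} (x² − |y−y′|²)^s` satisfies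
`−(x∂ₓ)² u + (n−1) x∂ₓ u + x² Δ_y u + s(n+s−1) u = 0`, i.e. it solves the model
Klein–Gordon equation `(□ − λ)u = 0` with `λ = −s(n+s−1)`. -/
theorem stmt9 (n : ℕ) (hn : 2 ≤ n) (s : ℂ) (y' : Fin (n - 1) → ℝ) :
    ∀ p : ℝ × (Fin (n - 1) → ℝ), 0 < p.1 → (∑ j, (p.2 j - y' j) ^ 2) < p.1 ^ 2 →
      (-( (p.1 : ℂ) * pderivX (fun q => (q.1 : ℂ) *
            pderivX (fun q' : ℝ × (Fin (n - 1) → ℝ) =>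
              (q'.1 : ℂ) ^ (-s) *
                (((q'.1 ^ 2 - ∑ j, (q'.2 j - y' j) ^ 2 : ℝ)) : ℂ) ^ s) q) p)
        + ((n : ℂ) - 1) * ((p.1 : ℂ) *
            pderivX (fun q' : ℝ × (Fin (n - 1) → ℝ) =>
              (q'.1 : ℂ) ^ (-s) *
                (((q'.1 ^ 2 - ∑ j, (q'.2 j - y' j) ^ 2 : ℝ)) : ℂ) ^ s) p)
        + (p.1 : ℂ) ^ 2 *
            lapY (fun q' : ℝ × (Fin (n - 1) → ℝ) =>
              (q'.1 : ℂ) ^ (-s) *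
                (((q'.1 ^ 2 - ∑ j, (q'.2 j - y' j) ^ 2 : ℝ)) : ℂ) ^ s) p
        + s * ((n : ℂ) + s - 1) *
            ((p.1 : ℂ) ^ (-s) *
              (((p.1 ^ 2 - ∑ j, (p.2 j - y' j) ^ 2 : ℝ)) : ℂ) ^ s))
      = 0 := by
  intro p hx hlt
  have hf : 0 < S9.f y' p := by simpa [S9.f, sub_pos] using hlt
  have hkey := S9.key (y' := y') hx hf s
  have hm : ((n - 1 : ℕ) : ℂ) = (n : ℂ) - 1 := by
    have : (1 : ℕ) ≤ n := by omega
    push_cast [Nat.cast_sub this]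
    ring
  rw [hm, show s * (((n : ℂ) - 1) + s) = s * ((n : ℂ) + s - 1) by ring] at hkey
  exact hkey
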